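/- Let L be a left Bol loop and let a, b ∈ C(L) be elements of the commutant, where a has finite odd order, i.e., a^n = 1 for some odd positive integer n (powers defined by a^0 = 1 and a^(k+1) = a·a^k). Then the product a·b lies in C(L). -/

import Mathlib

/-- A loop: a type with a binary operation and a two-sided neutral element,
in which the equations `a * x = b` and `y * a = b` have unique solutions. -/
class Loop' (L : Type*) extends Mul L, One L where
  one_mul : ∀ x : L, 1 * x = x
  mul_one : ∀ x : L, x * 1 = x
  existsUnique_mul_left : ∀ a b : L, ∃! x : L, a * x = b
  existsUnique_mul_right : ∀ a b : L, ∃! y : L, y * a = b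

/-- The (left) Bol identity. -/
def IsBolLoop (L : Type*) [Loop' L] : Prop :=
  ∀ x y z : L, x * (y * (x * z)) = (x * (y * x)) * z

/-- The commutant of a loop. -/
def commutant (L : Type*) [Loop' L] : Set L :=
  {a : L | ∀ x : L, a * x = x * a}

/-- Powers: `a ^ 0 = 1`, `a ^ (k+1) = a * a ^ k`. -/
def lpow {L : Type*} [Loop' L] (a : L) : ℕ → L
  | 0 => 1
  | k + 1 => a * lpow a k

theorem Equiv.Perm.apply_inv_self {α : Type*} (f : Equiv.Perm α) (x : α) : f (f⁻¹ x) = x :=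
  f.apply_symm_apply x

theorem Equiv.Perm.inv_apply_self {α : Type*} (f : Equiv.Perm α) (x : α) : f⁻¹ (f x) = x :=
  f.symm_apply_apply x

section BolAux

variable {L : Type*} [Loop' L]

private lemma bol_mul_left_bijective (x : L) : Function.Bijective (fun u : L => x * u) := by
  constructor
  · intro u v huv
    obtain ⟨w, -, hw⟩ := Loop'.existsUnique_mul_left x (x * v)
    exact (hw u huv).trans (hw v rfl).symm
  · intro y
    obtain ⟨w, hw, -⟩ := Loop'.existsUnique_mul_left x y
    exact ⟨w, hw⟩

/-- The left translation by `x` as a permutation. -/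
private noncomputable def LP (x : L) : Equiv.Perm L := Equiv.ofBijective _ (bol_mul_left_bijective x)

private lemma LP_apply (x u : L) : LP x u = x * u := rfl

private lemma LP_one : LP (1 : L) = 1 :=
  Equiv.ext fun u => Loop'.one_mul u

private lemma bolP (hBol : IsBolLoop L) (x y : L) :
    LP x * LP y * LP x = LP (x * (y * x)) :=
  Equiv.ext fun z => hBol x y z

private lemma lalt (hBol : IsBolLoop L) (x : L) : LP (x * x) = LP x * LP x := by
  have h := bolP hBol x 1
  rw [LP_one, mul_one, Loop'.one_mul x] at h
  exact h.symm

private lemma lalt' (hBol : IsBolLoop L) (x z : L) : (x * x) * z = x * (x * z) := by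
  have h := hBol x 1 z
  simp only [Loop'.one_mul] at h
  exact h.symm

private lemma Gkey (hBol : IsBolLoop L) {p : L} (hp : p ∈ commutant L) (u z : L) :
    p * (u * (p * z)) = (p * (p * u)) * z := by
  have hp' : ∀ y, p * y = y * p := hp
  have h := hBol p u z
  rw [← hp' u] at h
  exact h

private lemma K3pt (hBol : IsBolLoop L) {p q : L} (hp : p ∈ commutant L)
    (hq : q ∈ commutant L) (u : L) :
    (LP p)⁻¹ (q * (p * (p * u))) = (LP q)⁻¹ (p * (q * (q * u))) := by
  have hp' : ∀ y, p * y = y * p := hp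
  have hq' : ∀ y, q * y = y * q := hq
  have h1 : q * (p * (p * u)) = LP p (u * (p * q)) := by
    rw [hq' (p * (p * u))]
    exact (Gkey hBol hp u q).symm
  have h2 : p * (q * (q * u)) = LP q (u * (q * p)) := by
    rw [hp' (q * (q * u))]
    exact (Gkey hBol hq u p).symm
  rw [h1, h2, Equiv.Perm.inv_apply_self, Equiv.Perm.inv_apply_self, hp' q]

private lemma sq_mem (hBol : IsBolLoop L) {p : L} (hp : p ∈ commutant L) :
    p * p ∈ commutant L := by
  have hp' : ∀ y, p * y = y * p := hp
  intro x
  have h := Gkey hBol hp x p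
  rw [← hp' (p * (p * x))] at h
  have h2 := (LP p).injective h
  rw [lalt' hBol p x]
  exact h2.symm

/-- The key fact: for `c, b` in the commutant of a left Bol loop,
`(c*c)*b` is in the commutant. -/
private lemma key (hBol : IsBolLoop L) {c b : L} (hc : c ∈ commutant L)
    (hb : b ∈ commutant L) (x : L) :
    ((c * c) * b) * x = x * ((c * c) * b) := by
  have hc' : ∀ y, c * y = y * c := hc
  have hb' : ∀ y, b * y = y * b := hb
  set P := LP c with hPdef
  set Q := LP b with hQdef
  -- A1 : pointwise  P⁻¹ Q P P = Q⁻¹ P Q Q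
  have hA1 : ∀ w : L, P⁻¹ (Q (P (P w))) = Q⁻¹ (P (Q (Q w))) := fun w => K3pt hBol hc hb w
  -- A2 : from K3 with (c*c, b)
  have hA2 : ∀ w : L, P⁻¹ (P⁻¹ (Q (P (P (P (P w)))))) = Q⁻¹ (P (P (Q (Q w)))) := by
    intro w
    have h := K3pt hBol (sq_mem hBol hc) hb w
    rw [lalt hBol c] at h
    simp only [mul_inv_rev, Equiv.Perm.mul_apply] at h
    simp only [lalt' hBol] at h
    exact h
  -- A3 : from K3 with (c, b*b)
  have hA3 : ∀ w : L, P⁻¹ (Q (Q (P (P w)))) = Q⁻¹ (Q⁻¹ (P (Q (Q (Q (Q w)))))) := by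
    intro w
    have h := K3pt hBol hc (sq_mem hBol hb) w
    rw [lalt hBol b] at h
    simp only [mul_inv_rev, Equiv.Perm.mul_apply] at h
    simp only [lalt' hBol] at h
    exact h
  -- st1 : Q P P w = P (Q⁻¹ (P (Q (Q w))))
  have st1 : ∀ w : L, Q (P (P w)) = P (Q⁻¹ (P (Q (Q w)))) := by
    intro w
    calc Q (P (P w)) = P (P⁻¹ (Q (P (P w)))) := (P.apply_inv_self _).symm
    _ = P (Q⁻¹ (P (Q (Q w)))) := congrArg P (hA1 w)
  -- st1' : P Q Q w = Q (P⁻¹ (Q (P (P w))))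
  have st1' : ∀ w : L, P (Q (Q w)) = Q (P⁻¹ (Q (P (P w)))) := by
    intro w
    calc P (Q (Q w)) = Q (Q⁻¹ (P (Q (Q w)))) := (Q.apply_inv_self _).symm
    _ = Q (P⁻¹ (Q (P (P w)))) := by rw [← hA1 w]
  -- hRi : P commutes with Q⁻¹PQ
  have hRi : ∀ t : L, P (Q⁻¹ (P (Q t))) = Q⁻¹ (P (Q (P t))) := by
    intro t
    have h := hA2 (Q⁻¹ (Q⁻¹ (P⁻¹ (Q t))))
    rw [st1 (P (P (Q⁻¹ (Q⁻¹ (P⁻¹ (Q t))))))] at h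
    rw [st1 (Q⁻¹ (Q⁻¹ (P⁻¹ (Q t))))] at h
    simp only [Equiv.Perm.apply_inv_self, Equiv.Perm.inv_apply_self] at h
    have h2 := congrArg P h
    rw [P.apply_inv_self] at h2
    exact h2.symm
  -- hRii : Q commutes with P⁻¹QP
  have hRii : ∀ t : L, Q (P⁻¹ (Q (P t))) = P⁻¹ (Q (P (Q t))) := by
    intro t
    have h := hA3 (P⁻¹ (P⁻¹ (Q⁻¹ (P t))))
    rw [st1' (Q (Q (P⁻¹ (P⁻¹ (Q⁻¹ (P t))))))] at h
    rw [st1' (P⁻¹ (P⁻¹ (Q⁻¹ (P t))))] at h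
    simp only [Equiv.Perm.apply_inv_self, Equiv.Perm.inv_apply_self] at h
    have h2 := congrArg Q h
    rw [Q.apply_inv_self] at h2
    exact h2
  -- main engine : P (P (P (Q w))) = Q (P (P (P w)))
  have E3 : ∀ w : L, P (P (P (Q w))) = Q (P (P (P w))) := by
    intro w
    have e1 : Q (P (P (Q w))) = P (Q⁻¹ (P (Q (Q (Q w))))) := by
      rw [← P.apply_inv_self (Q (P (P (Q w))))]
      rw [hA1 (Q w)]
    have e2 : P (Q⁻¹ (P (Q (Q (Q w))))) = Q⁻¹ (P (Q (P (Q (Q w))))) := hRi (Q (Q w))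
    have e3 : Q⁻¹ (P (Q (P (Q (Q w))))) = Q⁻¹ (P (Q (Q (Q⁻¹ (P (Q (Q w))))))) := by
      rw [Q.apply_inv_self (P (Q (Q w)))]
    have e4 : Q⁻¹ (P (Q (Q (Q⁻¹ (P (Q (Q w))))))) =
        P⁻¹ (Q (P (P (Q⁻¹ (P (Q (Q w))))))) := (hA1 (Q⁻¹ (P (Q (Q w))))).symm
    have e5 : P⁻¹ (Q (P (P (Q⁻¹ (P (Q (Q w))))))) = P⁻¹ (Q (P (Q (P (P w))))) := by
      rw [← hA1 w, P.apply_inv_self]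
    have e6 : P⁻¹ (Q (P (Q (P (P w))))) = Q (P⁻¹ (Q (P (P (P w)))))
      := (hRii (P (P w))).symm
    have main := ((((e1.trans e2).trans e3).trans e4).trans e5).trans e6
    have e7 := Q.injective main
    have e8 := congrArg P e7
    rw [P.apply_inv_self] at e8
    exact e8
  -- now the element computation
  have hL : ((c * c) * b) * x = c * (b * (c * x)) := by
    have h1 : (c * c) * b = c * (b * c) := by
      rw [lalt' hBol c b, ← hb' c]
    rw [h1]
    exact (hBol c b x).symm
  have g1 : c * (x * ((c * c) * b)) = (c * (c * x)) * (c * b) := by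
    have g := Gkey hBol hc x (c * b)
    rw [← lalt' hBol c b] at g
    exact g
  have g2 : c * ((c * (c * x)) * (c * b)) = (c * (c * (c * (c * x)))) * b :=
    Gkey hBol hc (c * (c * x)) b
  have hR : c * (c * (x * ((c * c) * b))) = b * (c * (c * (c * (c * x)))) := by
    calc c * (c * (x * ((c * c) * b)))
        = c * ((c * (c * x)) * (c * b)) := congrArg (fun t => c * t) g1
      _ = (c * (c * (c * (c * x)))) * b := g2
      _ = b * (c * (c * (c * (c * x)))) := (hb' _).symm
  have hLL : c * (c * (((c * c) * b) * x)) = b * (c * (c * (c * (c * x)))) := by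
    rw [hL]
    exact E3 (P x)
  have hfin : c * (c * (((c * c) * b) * x)) = c * (c * (x * ((c * c) * b))) :=
    hLL.trans hR.symm
  exact (LP c).injective ((LP c).injective hfin)

private lemma powLP (hBol : IsBolLoop L) {a : L} (ha : a ∈ commutant L) :
    ∀ k, LP (lpow a k) = (LP a) ^ k := by
  have ha' : ∀ x, a * x = x * a := ha
  have keyP : ∀ k, LP (lpow a k) = (LP a) ^ k ∧ LP (lpow a (k + 1)) = (LP a) ^ (k + 1) := by
    intro k
    induction k with
    | zero =>
      constructor
      · show LP (1 : L) = _
        rw [LP_one, pow_zero]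
      · show LP (a * 1) = _
        rw [Loop'.mul_one, pow_one]
    | succ k ih =>
      refine ⟨ih.2, ?_⟩
      have h2 : lpow a (k + 2) = a * (lpow a k * a) := by
        show a * lpow a (k + 1) = _
        rw [show lpow a (k + 1) = a * lpow a k from rfl, ha' (lpow a k)]
      rw [h2, ← bolP hBol a (lpow a k), ih.1]
      rw [pow_succ, pow_succ']
  exact fun k => (keyP k).1

private lemma pow_apply_lpow {a : L} : ∀ j k, ((LP a) ^ j) (lpow a k) = lpow a (j + k) := by
  intro j
  induction j with
  | zero => intro k; simp
  | succ j ih =>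
    intro k
    rw [pow_succ', Equiv.Perm.mul_apply, ih]
    show a * lpow a (j + k) = lpow a (j + 1 + k)
    rw [show j + 1 + k = (j + k) + 1 from by omega]
    rfl

private lemma lpow_add_self (hBol : IsBolLoop L) {a : L} (ha : a ∈ commutant L) (m : ℕ) :
    lpow a m * lpow a m = lpow a (m + m) := by
  have h : lpow a m * lpow a m = LP (lpow a m) (lpow a m) := rfl
  rw [h, powLP hBol ha m, pow_apply_lpow]

private lemma bol_pow_mem (hBol : IsBolLoop L) {a : L} (ha : a ∈ commutant L) :
    ∀ k, lpow a k ∈ commutant L := by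
  have ha' : ∀ x, a * x = x * a := ha
  intro k
  induction k with
  | zero =>
    intro x
    show 1 * x = x * 1
    rw [Loop'.one_mul, Loop'.mul_one]
  | succ k ih =>
    have ih' : ∀ x, lpow a k * x = x * lpow a k := ih
    have hsplit : ∀ y : L, a * (lpow a k * y) = lpow a k * (a * y) := by
      intro y
      calc a * (lpow a k * y) = (LP a * LP (lpow a k)) y := rfl
        _ = ((LP a) ^ (k + 1)) y := by rw [powLP hBol ha k, ← pow_succ']
        _ = (LP (lpow a k) * LP a) y := by rw [pow_succ, powLP hBol ha k]
        _ = lpow a k * (a * y) := rfl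
    intro x
    show (a * lpow a k) * x = x * (a * lpow a k)
    have h1 : a * (x * (a * lpow a k)) = (a * (a * x)) * lpow a k :=
      Gkey hBol ha x (lpow a k)
    rw [← ih' (a * (a * x))] at h1
    have h2 : lpow a k * (a * (a * x)) = a * ((a * lpow a k) * x) := by
      have hsp2 : (a * lpow a k) * x = a * (lpow a k * x) := by
        calc (a * lpow a k) * x = LP (lpow a (k + 1)) x := rfl
          _ = ((LP a) ^ (k + 1)) x := by rw [powLP hBol ha (k + 1)]
          _ = (LP a * (LP a) ^ k) x := by rw [pow_succ']
          _ = a * (LP (lpow a k) x) := by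
                rw [Equiv.Perm.mul_apply, powLP hBol ha k]; rfl
          _ = a * (lpow a k * x) := rfl
      rw [hsp2, ← hsplit (a * x), ← hsplit x]
    have h3 := h1.trans h2
    exact ((LP a).injective h3).symm

end BolAux

/-- In a left Bol loop, if `a` and `b` are commutant elements and `a`
has finite odd order, then `a * b` is a commutant element. -/
theorem mul_mem_commutant_of_odd_order (L : Type*) [Loop' L] (hBol : IsBolLoop L)
    (a b : L) (ha : a ∈ commutant L) (hb : b ∈ commutant L)
    (hodd : ∃ n : ℕ, Odd n ∧ 0 < n ∧ lpow a n = 1) :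
    a * b ∈ commutant L := by
  obtain ⟨n, hoddn, hpos, hn⟩ := hodd
  obtain ⟨r, hr⟩ := hoddn
  have hc : lpow a (r + 1) ∈ commutant L := bol_pow_mem hBol ha (r + 1)
  have hcc : lpow a (r + 1) * lpow a (r + 1) = a := by
    rw [lpow_add_self hBol ha (r + 1)]
    rw [show (r + 1) + (r + 1) = n + 1 from by omega]
    show a * lpow a n = a
    rw [hn]
    exact Loop'.mul_one a
  intro x
  have hk := key hBol hc hb x
  rw [hcc] at hk
  exact hk
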